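/- Let κ be regular and let θ = 𝔫_κ^{2^κ}. Then θ is the unique cardinal μ ≥ κ with 𝔫_κ^μ = μ, and for every cardinal θ₁ ≥ θ one has 𝔫_κ^{θ₁} = θ. -/

import Mathlib

open Cardinal Set

universe u

/-- `ExtFn q p` : the partial function `q` extends `p`. -/
def ExtFn {θ : Type u} (q p : θ → Option Bool) : Prop :=
  ∀ x b, p x = some b → q x = some b

/-- `Fn κ θ` : partial functions `θ → 2` of size `< κ`. -/
def Fn (κ : Cardinal.{u}) (θ : Type u) : Set (θ → Option Bool) :=
  {p | #{x | p x ≠ none} < κ}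

/-- The basic open set determined by a condition `p`. -/
def cylinder {θ : Type u} (p : θ → Option Bool) : Set (θ → Bool) :=
  {f | ∀ x b, p x = some b → f x = b}

/-- The topology of the space `(2^θ)_κ`. -/
def kTop (κ : Cardinal.{u}) (θ : Type u) : TopologicalSpace (θ → Bool) :=
  TopologicalSpace.generateFrom {U | ∃ p ∈ Fn κ θ, U = cylinder p}

/-- The Baire number of the space `(2^θ)_κ` : the least cardinality of a family of
dense open sets with empty intersection. -/
noncomputable def spaceBaire (κ : Cardinal.{u}) (θ : Type u) : Cardinal.{u} :=
  sInf {c | ∃ F : Set (Set (θ → Bool)), #F = c ∧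
    (∀ U ∈ F, @IsOpen _ (kTop κ θ) U ∧ @Dense _ (kTop κ θ) U) ∧ ⋂₀ F = ∅}

/-- `𝔫_κ^θ` for cardinals `κ ≤ θ`. -/
noncomputable def nBaire (κ θ : Cardinal.{u}) : Cardinal.{u} :=
  spaceBaire κ θ.out

section Dev

variable {κ : Cardinal.{u}} {T : Type u}

/-- The "witness set" whose infimum is `spaceBaire`. -/
def WitSet (κ : Cardinal.{u}) (T : Type u) : Set Cardinal.{u} :=
  {c | ∃ F : Set (Set (T → Bool)), #F = c ∧
    (∀ U ∈ F, @IsOpen _ (kTop κ T) U ∧ @Dense _ (kTop κ T) U) ∧ ⋂₀ F = ∅}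

theorem spaceBaire_eq_sInf (κ : Cardinal.{u}) (T : Type u) :
    spaceBaire κ T = sInf (WitSet κ T) := rfl

theorem extFn_refl (p : T → Option Bool) : ExtFn p p := fun _ _ h => h

theorem extFn_trans {p q r : T → Option Bool} (h1 : ExtFn r q) (h2 : ExtFn q p) :
    ExtFn r p := fun x b hb => h1 x b (h2 x b hb)

theorem cylinder_anti {p q : T → Option Bool} (h : ExtFn q p) :
    cylinder q ⊆ cylinder p := fun f hf x b hb => hf x b (h x b hb)

theorem mem_cylinder {p : T → Option Bool} {f : T → Bool} :
    f ∈ cylinder p ↔ ∀ x b, p x = some b → f x = b := Iff.rfl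

/-- A canonical total extension of a partial function. -/
def totalExt (p : T → Option Bool) : T → Bool := fun x => (p x).getD false

theorem totalExt_mem (p : T → Option Bool) : totalExt p ∈ cylinder p := by
  intro x b hb; simp [totalExt, hb]

theorem cylinder_nonempty (p : T → Option Bool) : (cylinder p).Nonempty :=
  ⟨totalExt p, totalExt_mem p⟩

theorem mem_Fn_iff {p : T → Option Bool} : p ∈ Fn κ T ↔ #{x | p x ≠ none} < κ := Iff.rfl

/-- merging two partial functions, preferring `p`. -/
def mergeFn (p q : T → Option Bool) : T → Option Bool := fun x => (p x).orElse (fun _ => q x)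

theorem mergeFn_extFn_left (p q : T → Option Bool) : ExtFn (mergeFn p q) p := by
  intro x b hb; simp [mergeFn, hb]

theorem mergeFn_extFn_right {p q : T → Option Bool} {f : T → Bool}
    (hp : f ∈ cylinder p) (hq : f ∈ cylinder q) : ExtFn (mergeFn p q) q := by
  intro x b hb
  rcases h : p x with _ | b'
  · simp [mergeFn, h, hb]
  · have h1 := hp x b' h
    have h2 := hq x b hb
    simp [mergeFn, h, ← h1, h2]

theorem mergeFn_mem_Fn (hκ : ℵ₀ ≤ κ) {p q : T → Option Bool}
    (hp : p ∈ Fn κ T) (hq : q ∈ Fn κ T) : mergeFn p q ∈ Fn κ T := by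
  rw [mem_Fn_iff]
  have hsub : {x | mergeFn p q x ≠ none} ⊆ {x | p x ≠ none} ∪ {x | q x ≠ none} := by
    intro x hx
    rcases h : p x with _ | b'
    · rcases h' : q x with _ | b''
      · exact absurd (by simp [mergeFn, h, h']) hx
      · exact Or.inr (by simp [h'])
    · exact Or.inl (by simp [h])
  calc #{x | mergeFn p q x ≠ none} ≤ #({x | p x ≠ none} ∪ {x | q x ≠ none} : Set T) :=
        mk_le_mk_of_subset hsub
    _ ≤ #{x | p x ≠ none} + #{x | q x ≠ none} := mk_union_le _ _
    _ < κ := add_lt_of_lt hκ hp hq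

theorem isOpen_cylinder {p : T → Option Bool} (hp : p ∈ Fn κ T) :
    @IsOpen _ (kTop κ T) (cylinder p) :=
  TopologicalSpace.GenerateOpen.basic _ ⟨p, hp, rfl⟩

/-- Characterization of open sets of `kTop`. -/
theorem isOpen_kTop_iff (hκ : ℵ₀ ≤ κ) {U : Set (T → Bool)} :
    @IsOpen _ (kTop κ T) U ↔
      ∀ f ∈ U, ∃ p ∈ Fn κ T, f ∈ cylinder p ∧ cylinder p ⊆ U := by
  constructor
  · intro h
    induction h with
    | basic V hV =>
      rcases hV with ⟨p, hp, rfl⟩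
      exact fun f hf => ⟨p, hp, hf, subset_rfl⟩
    | univ =>
      intro f _
      refine ⟨fun _ => none, ?_, by simp [mem_cylinder], subset_univ _⟩
      rw [mem_Fn_iff]
      simpa using lt_of_lt_of_le aleph0_pos hκ
    | inter V W _ _ ihV ihW =>
      rintro f ⟨hfV, hfW⟩
      obtain ⟨p, hp, hfp, hpV⟩ := ihV f hfV
      obtain ⟨q, hq, hfq, hqW⟩ := ihW f hfW
      refine ⟨mergeFn p q, mergeFn_mem_Fn hκ hp hq, ?_, ?_⟩
      · intro x b hb
        rcases h : p x with _ | b'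
        · simp only [mergeFn, h, Option.orElse] at hb
          exact hfq x b hb
        · simp only [mergeFn, h] at hb
          cases hb; exact hfp x b h
      · intro g hg
        exact ⟨hpV (cylinder_anti (mergeFn_extFn_left p q) hg),
          hqW (cylinder_anti (mergeFn_extFn_right hfp hfq) hg)⟩
    | sUnion S _ ih =>
      rintro f ⟨V, hV, hfV⟩
      obtain ⟨p, hp, hfp, hpV⟩ := ih V hV f hfV
      exact ⟨p, hp, hfp, hpV.trans (subset_sUnion_of_mem hV)⟩
  · intro h
    have : U = ⋃₀ {V | ∃ p ∈ Fn κ T, V = cylinder p ∧ cylinder p ⊆ U} := by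
      apply Set.Subset.antisymm
      · intro f hf
        obtain ⟨p, hp, hfp, hpU⟩ := h f hf
        exact ⟨cylinder p, ⟨p, hp, rfl, hpU⟩, hfp⟩
      · rintro f ⟨V, ⟨p, _, rfl, hpU⟩, hfV⟩
        exact hpU hfV
    rw [this]
    exact TopologicalSpace.GenerateOpen.sUnion _ fun V ⟨p, hp, hV, _⟩ =>
      hV ▸ TopologicalSpace.GenerateOpen.basic _ ⟨p, hp, rfl⟩

/-- Characterization of dense sets of `kTop`. -/
theorem dense_kTop_iff (hκ : ℵ₀ ≤ κ) {U : Set (T → Bool)} :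
    @Dense _ (kTop κ T) U ↔ ∀ p ∈ Fn κ T, (U ∩ cylinder p).Nonempty := by
  letI := kTop κ T
  constructor
  · intro hd p hp
    have := hd.inter_open_nonempty (cylinder p) (isOpen_cylinder hp) (cylinder_nonempty p)
    exact this.imp fun f hf => ⟨hf.2, hf.1⟩
  · intro h
    rw [dense_iff_inter_open]
    rintro V hV ⟨f, hf⟩
    obtain ⟨p, hp, _, hpV⟩ := (isOpen_kTop_iff hκ).1 hV f hf
    obtain ⟨g, hgU, hgp⟩ := h p hp
    exact ⟨g, hpV hgp, hgU⟩

end Dev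
section Dev2

attribute [local instance] Classical.propDecidable

variable {κ : Cardinal.{u}} {T T' : Type u}

theorem witSet_mem_of_family {ι : Type u} (D : ι → Set (T → Bool))
    (hop : ∀ i, @IsOpen _ (kTop κ T) (D i)) (hde : ∀ i, @Dense _ (kTop κ T) (D i))
    (hint : ⋂ i, D i = ∅) : #(range D) ∈ WitSet κ T := by
  refine ⟨range D, rfl, ?_, ?_⟩
  · rintro U ⟨i, rfl⟩; exact ⟨hop i, hde i⟩
  · rw [sInter_range]; exact hint

theorem spaceBaire_le_family {ι : Type u} (D : ι → Set (T → Bool))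
    (hop : ∀ i, @IsOpen _ (kTop κ T) (D i)) (hde : ∀ i, @Dense _ (kTop κ T) (D i))
    (hint : ⋂ i, D i = ∅) : spaceBaire κ T ≤ #ι := by
  rw [spaceBaire_eq_sInf]
  exact le_trans (csInf_le' (witSet_mem_of_family D hop hde hint)) mk_range_le

/-- The "single point" condition. -/
noncomputable def singleFn (y : T) (b : Bool) : T → Option Bool := fun z => if z = y then some b else none

theorem singleFn_mem_Fn (hκ : ℵ₀ ≤ κ) (y : T) (b : Bool) : singleFn y b ∈ Fn κ T := by
  rw [mem_Fn_iff]
  have : {z | singleFn y b z ≠ none} = {y} := by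
    ext z; by_cases h : z = y <;> simp [singleFn, h]
  rw [this, mk_singleton]
  exact lt_of_lt_of_le one_lt_aleph0 hκ

theorem mem_cylinder_singleFn {y : T} {b : Bool} {f : T → Bool} :
    f ∈ cylinder (singleFn y b) ↔ f y = b := by
  constructor
  · intro h; exact h y b (by simp [singleFn])
  · intro h z b' hb'
    by_cases hz : z = y
    · subst hz; simp [singleFn] at hb'; rw [h, hb']
    · simp [singleFn, hz] at hb'

theorem mk_support_le {p : T → Option Bool} (hp : p ∈ Fn κ T) :
    #{x | p x ≠ none} < κ := hp

/-- Upper bound: a witness family of size `2 ^ κ`. -/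
theorem two_power_family (hκ : ℵ₀ ≤ κ) (hT : κ ≤ #T) :
    spaceBaire κ T ≤ 2 ^ κ ∧ ∃ c ∈ WitSet κ T, c ≤ 2 ^ κ := by
  have hle : #(Quotient.out κ) ≤ #T := by rwa [mk_out]
  obtain ⟨e⟩ := Cardinal.le_def _ _ |>.1 hle
  set D : (Quotient.out κ → Bool) → Set (T → Bool) :=
    fun x => {f | ∃ j, f (e j) ≠ x j} with hD
  have hopen : ∀ x, @IsOpen _ (kTop κ T) (D x) := by
    intro x
    have : D x = ⋃ j, cylinder (singleFn (e j) (!(x j))) := by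
      ext f
      simp only [hD, mem_setOf_eq, mem_iUnion, mem_cylinder_singleFn]
      constructor
      · rintro ⟨j, hj⟩; exact ⟨j, by simp [Bool.eq_not_iff, hj]⟩
      · rintro ⟨j, hj⟩; exact ⟨j, by simp [Bool.eq_not_iff] at hj; exact hj⟩
    rw [this]
    letI := kTop κ T
    exact isOpen_iUnion fun j => isOpen_cylinder (singleFn_mem_Fn hκ _ _)
  have hdense : ∀ x, @Dense _ (kTop κ T) (D x) := by
    intro x
    rw [dense_kTop_iff hκ]
    intro p hp
    have : ∃ j, p (e j) = none := by
      by_contra h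
      push_neg at h
      have : Function.Injective (fun j => (⟨e j, h j⟩ : {z | p z ≠ none})) := by
        intro a b hab
        exact e.injective (congrArg Subtype.val hab)
      have hk : κ ≤ #{z | p z ≠ none} := by
        calc κ = #(Quotient.out κ) := (mk_out κ).symm
          _ ≤ #{z | p z ≠ none} := mk_le_of_injective this
      exact absurd (mk_support_le hp) (not_lt.2 hk)
    obtain ⟨j, hj⟩ := this
    refine ⟨fun z => if z = e j then !(x j) else totalExt p z, ⟨j, by simp⟩, ?_⟩
    intro z b hb
    have hz : z ≠ e j := fun h => by rw [h, hj] at hb; cases hb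
    simp [hz, totalExt, hb]
  have hint : ⋂ x, D x = ∅ := by
    rw [eq_empty_iff_forall_notMem]
    intro f hf
    have := mem_iInter.1 hf (fun j => f (e j))
    obtain ⟨j, hj⟩ := this
    exact hj rfl
  have hcard : #(Quotient.out κ → Bool) = 2 ^ κ := by
    simp [mk_arrow, mk_out]
  constructor
  · calc spaceBaire κ T ≤ #(Quotient.out κ → Bool) := spaceBaire_le_family D hopen hdense hint
      _ = 2 ^ κ := hcard
  · refine ⟨#(range D), witSet_mem_of_family D hopen hdense hint, ?_⟩
    exact le_trans mk_range_le (le_of_eq hcard)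

theorem spaceBaire_le_two_power (hκ : ℵ₀ ≤ κ) (hT : κ ≤ #T) :
    spaceBaire κ T ≤ 2 ^ κ := (two_power_family hκ hT).1

theorem witSet_nonempty (hκ : ℵ₀ ≤ κ) (hT : κ ≤ #T) : (WitSet κ T).Nonempty := by
  obtain ⟨c, hc, _⟩ := (two_power_family hκ hT).2
  exact ⟨c, hc⟩

end Dev2
section Dev4

attribute [local instance] Classical.propDecidable

variable {κ : Cardinal.{u}} {T : Type u}

theorem exists_ext_into (hκ : ℵ₀ ≤ κ) {U : Set (T → Bool)}
    (hUo : @IsOpen _ (kTop κ T) U) (hUd : @Dense _ (kTop κ T) U)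
    {u : T → Option Bool} (hu : u ∈ Fn κ T) :
    ∃ p, p ∈ Fn κ T ∧ ExtFn p u ∧ cylinder p ⊆ U := by
  obtain ⟨f₀, hf₀U, hf₀u⟩ := (dense_kTop_iff hκ).1 hUd u hu
  obtain ⟨p₀, hp₀, hf₀p₀, hp₀U⟩ := (isOpen_kTop_iff hκ).1 hUo f₀ hf₀U
  refine ⟨mergeFn p₀ u, mergeFn_mem_Fn hκ hp₀ hu, mergeFn_extFn_right hf₀p₀ hf₀u, ?_⟩
  exact (cylinder_anti (mergeFn_extFn_left p₀ u)).trans hp₀U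

variable (D : (Cardinal.ord κ).ToType → Set (T → Bool))

/-- union of previous conditions along a chain -/
noncomputable def prevUnion (g : (Cardinal.ord κ).ToType → T → Option Bool)
    (j : (Cardinal.ord κ).ToType) : T → Option Bool :=
  fun x => if h : ∃ b, ∃ j', ∃ _ : j' < j, g j' x = some b then some h.choose else none

/-- step of the recursion -/
noncomputable def pickExt (j : (Cardinal.ord κ).ToType) (u : T → Option Bool) :
    T → Option Bool :=
  if h : ∃ p, p ∈ Fn κ T ∧ ExtFn p u ∧ cylinder p ⊆ D j then h.choose else u

/-- the recursively built chain of conditions -/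
noncomputable def theChain : (Cardinal.ord κ).ToType → T → Option Bool :=
  (wellFounded_lt (α := (Cardinal.ord κ).ToType)).fix fun j rec =>
    pickExt D j (fun x =>
      if h : ∃ b, ∃ j', ∃ hj : j' < j, rec j' hj x = some b then some h.choose else none)

theorem theChain_eq (j : (Cardinal.ord κ).ToType) :
    theChain D j = pickExt D j (prevUnion (theChain D) j) := by
  rw [theChain, WellFounded.fix_eq]
  rfl

theorem theChain_spec (hreg : κ.IsRegular)
    (hop : ∀ i, @IsOpen _ (kTop κ T) (D i)) (hde : ∀ i, @Dense _ (kTop κ T) (D i)) :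
    ∀ j, theChain D j ∈ Fn κ T ∧ (∀ j' < j, ExtFn (theChain D j) (theChain D j')) ∧
      cylinder (theChain D j) ⊆ D j := by
  have hκ := hreg.aleph0_le
  intro j
  induction j using WellFoundedLT.induction with
  | ind j IH =>
  -- the union of the previous conditions
  set u := prevUnion (theChain D) j with hu
  have hext : ∀ j' (h : j' < j), ExtFn u (theChain D j') := by
    intro j' hj' x b hb
    have h : ∃ b, ∃ j'', ∃ _ : j'' < j, theChain D j'' x = some b := ⟨b, j', hj', hb⟩
    have hch : h.choose = b := by
      obtain ⟨j'', hj'', hb''⟩ := h.choose_spec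
      rcases lt_trichotomy j'' j' with hlt | heq | hgt
      · have h2 := (IH j' hj').2.1 j'' hlt x _ hb''
        rw [hb] at h2; exact (Option.some.inj h2).symm
      · rw [heq] at hb''; rw [hb] at hb''; exact (Option.some.inj hb'').symm
      · have h2 := (IH j'' hj'').2.1 j' hgt x b hb
        rw [hb''] at h2; exact Option.some.inj h2
    simp only [hu, prevUnion, dif_pos h, hch]
  have huFn : u ∈ Fn κ T := by
    rw [mem_Fn_iff]
    have hsub : {x | u x ≠ none} ⊆ ⋃ j' : Iio j, {x | theChain D j'.1 x ≠ none} := by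
      intro x hx
      rcases h : u x with _ | b
      · exact absurd h hx
      · simp only [hu, prevUnion] at h
        split at h
        · rename_i hh
          obtain ⟨b', j', hj', hb'⟩ := hh
          exact mem_iUnion.2 ⟨⟨j', hj'⟩, by simp [hb']⟩
        · cases h
    calc #{x | u x ≠ none} ≤ #(⋃ j' : Iio j, {x | theChain D j'.1 x ≠ none}) :=
          mk_le_mk_of_subset hsub
      _ ≤ Cardinal.sum fun j' : Iio j => #{x | theChain D j'.1 x ≠ none} :=
          mk_iUnion_le_sum_mk
      _ < κ := Cardinal.sum_lt_of_isRegular hreg (mk_Iio_ord_toType j)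
          fun j' => (IH j'.1 j'.2).1
  have hpick : ∃ p, p ∈ Fn κ T ∧ ExtFn p u ∧ cylinder p ⊆ D j :=
    exists_ext_into hκ (hop j) (hde j) huFn
  have hchain : theChain D j = hpick.choose := by
    rw [theChain_eq, pickExt, dif_pos hpick]
  obtain ⟨hFn, hExt, hcyl⟩ := hpick.choose_spec
  rw [← hchain] at hFn hExt hcyl
  exact ⟨hFn, fun j' hj' => extFn_trans hExt (hext j' hj'), hcyl⟩

theorem iInter_nonempty_of_ord_family (hreg : κ.IsRegular)
    (hop : ∀ i, @IsOpen _ (kTop κ T) (D i)) (hde : ∀ i, @Dense _ (kTop κ T) (D i)) :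
    (⋂ j, D j).Nonempty := by
  have hspec := theChain_spec D hreg hop hde
  set f : T → Bool := fun x =>
    if h : ∃ b, ∃ j, theChain D j x = some b then h.choose else false with hf
  refine ⟨f, mem_iInter.2 fun j => (hspec j).2.2 ?_⟩
  intro x b hb
  have h : ∃ b, ∃ j', theChain D j' x = some b := ⟨b, j, hb⟩
  have hch : h.choose = b := by
    obtain ⟨j', hb'⟩ := h.choose_spec
    rcases lt_trichotomy j' j with hlt | heq | hgt
    · have h2 := (hspec j).2.1 j' hlt x _ hb'
      rw [hb] at h2; exact (Option.some.inj h2).symm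
    · rw [heq] at hb'; rw [hb] at hb'; exact (Option.some.inj hb').symm
    · have h2 := (hspec j').2.1 j hgt x b hb
      rw [hb'] at h2; exact Option.some.inj h2
  simp only [hf, dif_pos h, hch]

theorem witSet_gt (hreg : κ.IsRegular) {c : Cardinal.{u}} (hc : c ∈ WitSet κ T) : κ < c := by
  by_contra hle
  push_neg at hle
  obtain ⟨F, hcF, hFod, hFint⟩ := hc
  rcases eq_empty_or_nonempty F with rfl | hFne
  · rw [sInter_empty] at hFint
    exact absurd hFint (Set.Nonempty.ne_empty ⟨fun _ => false, trivial⟩)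
  · have hFle : #↥F ≤ #((Cardinal.ord κ).ToType) := by
      rw [mk_toType, Cardinal.card_ord, hcF]; exact hle
    obtain ⟨inj⟩ := Cardinal.le_def _ _ |>.1 hFle
    set D : (Cardinal.ord κ).ToType → Set (T → Bool) := fun j =>
      if h : ∃ U : ↥F, inj U = j then (h.choose : ↥F).1 else univ with hD
    have hop : ∀ j, @IsOpen _ (kTop κ T) (D j) := by
      intro j
      by_cases h : ∃ U : ↥F, inj U = j
      · have : D j = (h.choose : ↥F).1 := by simp only [hD]; rw [dif_pos h]
        rw [this]; exact (hFod _ h.choose.2).1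
      · have : D j = Set.univ := by simp only [hD]; rw [dif_neg h]
        rw [this]; letI := kTop κ T; exact isOpen_univ
    have hde : ∀ j, @Dense _ (kTop κ T) (D j) := by
      intro j
      by_cases h : ∃ U : ↥F, inj U = j
      · have : D j = (h.choose : ↥F).1 := by simp only [hD]; rw [dif_pos h]
        rw [this]; exact (hFod _ h.choose.2).2
      · have : D j = Set.univ := by simp only [hD]; rw [dif_neg h]
        rw [this]; letI := kTop κ T; exact dense_univ
    obtain ⟨f, hfmem⟩ := iInter_nonempty_of_ord_family D hreg hop hde
    have : f ∈ ⋂₀ F := by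
      intro U hU
      have h : ∃ U' : ↥F, inj U' = inj ⟨U, hU⟩ := ⟨⟨U, hU⟩, rfl⟩
      have := mem_iInter.1 hfmem (inj ⟨U, hU⟩)
      rw [hD] at this
      simp only [dif_pos h] at this
      have hUeq : h.choose = ⟨U, hU⟩ := inj.injective h.choose_spec
      rwa [hUeq] at this
    rw [hFint] at this
    exact this

theorem succ_le_spaceBaire (hreg : κ.IsRegular) (hT : κ ≤ #T) :
    Order.succ κ ≤ spaceBaire κ T := by
  rw [spaceBaire_eq_sInf]
  exact le_csInf (witSet_nonempty hreg.aleph0_le hT)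
    fun c hc => Order.succ_le_of_lt (witSet_gt hreg hc)

end Dev4
section Dev5

attribute [local instance] Classical.propDecidable

variable {κ : Cardinal.{u}}

/-- counting small subsets when `2 ^ ρ ≤ κ` below `κ` -/
theorem mk_small_subsets (hreg : κ.IsRegular) (hB : ∀ ρ < κ, (2 : Cardinal.{u}) ^ ρ ≤ κ)
    {X : Type u} (hX : #X ≤ κ) : #{s : Set X // #s < κ} ≤ κ := by
  by_cases hsl : ∀ x < κ, (2 : Cardinal.{u}) ^ x < κ
  · -- strong limit case
    have hout : ∀ x < #(Quotient.out κ), (2 : Cardinal.{u}) ^ x < #(Quotient.out κ) := by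
      rwa [mk_out]
    have hcount := Cardinal.mk_subset_mk_lt_cof hout
    rw [mk_out, hreg.cof_eq] at hcount
    have hXe : #X ≤ #(Quotient.out κ) := by rwa [mk_out]
    obtain ⟨e⟩ := Cardinal.le_def _ _ |>.1 hXe
    have hinj : Function.Injective
        (fun s : {s : Set X // #s < κ} => (⟨e '' s.1, by
          rw [mk_image_eq e.injective]; exact s.2⟩ : {s : Set (Quotient.out κ) // #s < κ})) := by
      intro s₁ s₂ h12
      have := congrArg Subtype.val h12
      exact Subtype.ext (Set.image_injective.mpr e.injective this)
    calc #{s : Set X // #s < κ} ≤ #{s : Set (Quotient.out κ) // #s < κ} :=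
          mk_le_of_injective hinj
      _ = κ := hcount
  · push_neg at hsl
    obtain ⟨ρ, hρκ, hρ⟩ := hsl
    have hpow : ∀ μ < κ, κ ^ μ ≤ κ := by
      intro μ hμ
      calc κ ^ μ ≤ ((2 : Cardinal.{u}) ^ ρ) ^ μ := power_le_power_right hρ
        _ = (2 : Cardinal.{u}) ^ (ρ * μ) := by rw [← power_mul]
        _ ≤ κ := hB _ (Cardinal.mul_lt_of_lt hreg.aleph0_le hρκ hμ)
    have henc : ∀ s : {s : Set X // #s < κ},
        ∃ j : (Cardinal.ord κ).ToType, ∃ F : Set.Iio j → Option X,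
          s.1 = {x | ∃ y, F y = some x} := by
      rintro ⟨s, hs⟩
      have h1 : (#↥s).ord < Cardinal.ord κ := Cardinal.ord_lt_ord.2 hs
      refine ⟨Ordinal.ToType.mk (o := Cardinal.ord κ) ⟨(#↥s).ord, h1⟩, ?_⟩
      set j := Ordinal.ToType.mk (o := Cardinal.ord κ) ⟨(#↥s).ord, h1⟩ with hj
      have htypein : @Ordinal.typein ((Cardinal.ord κ).ToType) (· < ·) isWellOrder_lt j
            = (#↥s).ord := by
        rw [hj]
        exact @Ordinal.typein_enum _ (· < ·) isWellOrder_lt _ _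
      have hcardIio : #(Set.Iio j) = #↥s := by
        have h2 := @Ordinal.card_typein (Cardinal.ord κ).ToType (· < ·) isWellOrder_lt j
        rw [htypein, Cardinal.card_ord] at h2
        rw [h2]
        rfl
      obtain ⟨es⟩ := Cardinal.eq.1 hcardIio
      refine ⟨fun y => some (es y : ↥s).1, ?_⟩
      ext x
      constructor
      · intro hx
        refine ⟨es.symm ⟨x, hx⟩, ?_⟩
        show some (es (es.symm ⟨x, hx⟩) : ↥s).1 = some x
        rw [Equiv.apply_symm_apply]
      · rintro ⟨y, hy⟩
        have := Option.some.inj hy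
        rw [← this]
        exact (es y).2
    classical
    set recover : (Σ j : (Cardinal.ord κ).ToType, (Set.Iio j → Option X)) → Set X :=
      fun z => {x | ∃ y, z.2 y = some x} with hrec
    set φ : {s : Set X // #s < κ} → Σ j : (Cardinal.ord κ).ToType, (Set.Iio j → Option X) :=
      fun s => ⟨(henc s).choose, (henc s).choose_spec.choose⟩ with hφ
    have hrecφ : ∀ s, recover (φ s) = s.1 := by
      intro s
      exact ((henc s).choose_spec.choose_spec).symm
    have hφinj : Function.Injective φ := by
      intro s₁ s₂ h12
      apply Subtype.ext
      rw [← hrecφ s₁, ← hrecφ s₂, h12]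
    calc #{s : Set X // #s < κ}
        ≤ #(Σ j : (Cardinal.ord κ).ToType, (Set.Iio j → Option X)) := mk_le_of_injective hφinj
      _ = Cardinal.sum fun j : (Cardinal.ord κ).ToType => #(Set.Iio j → Option X) := mk_sigma _
      _ ≤ Cardinal.sum fun _ : (Cardinal.ord κ).ToType => κ := by
          apply sum_le_sum
          intro j
          rw [mk_arrow]
          simp only [Cardinal.lift_id]
          calc #(Option X) ^ #(Set.Iio j) ≤ κ ^ #(Set.Iio j) := by
                apply power_le_power_right
                rw [mk_option]
                calc #X + 1 ≤ κ + 1 := add_le_add_left hX 1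
                  _ = κ := add_one_eq hreg.aleph0_le
            _ ≤ κ := hpow _ (mk_Iio_ord_toType j)
      _ = #((Cardinal.ord κ).ToType) * κ := sum_const' _ _
      _ = κ * κ := by rw [mk_toType, Cardinal.card_ord]
      _ = κ := mul_eq_self hreg.aleph0_le

/-- counting conditions with support inside a `≤ κ`-sized set -/
theorem mk_small_conds (hreg : κ.IsRegular) (hB : ∀ ρ < κ, (2 : Cardinal.{u}) ^ ρ ≤ κ)
    {T : Type u} {B : Set T} (hBκ : #↥B ≤ κ) :
    #{q : T → Option Bool // q ∈ Fn κ T ∧ ∀ x, q x ≠ none → x ∈ B} ≤ κ := by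
  have hX : #(↥B × Bool) ≤ κ := by
    have h2 : #(↥B × Bool) = #↥B * 2 := by
      rw [mk_prod, mk_bool]
      simp
    rw [h2]
    have h2k : (2 : Cardinal.{u}) ≤ κ := by
      refine le_trans ?_ hreg.aleph0_le
      exact_mod_cast (nat_lt_aleph0 2).le
    calc #↥B * 2 ≤ κ * κ := mul_le_mul' hBκ h2k
      _ = κ := mul_eq_self hreg.aleph0_le
  have hgr : ∀ q : {q : T → Option Bool // q ∈ Fn κ T ∧ ∀ x, q x ≠ none → x ∈ B},
      #{p : ↥B × Bool | q.1 p.1.1 = some p.2} < κ := by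
    intro q
    have hinj : Function.Injective (fun p : {p : ↥B × Bool // q.1 p.1.1 = some p.2} =>
        (⟨p.1.1.1, by
          have hp := p.2
          simp only [mem_setOf_eq] at hp ⊢
          rw [hp]
          exact Option.some_ne_none _⟩ : {x | q.1 x ≠ none})) := by
      rintro ⟨⟨⟨x₁, hx₁⟩, b₁⟩, hp₁⟩ ⟨⟨⟨x₂, hx₂⟩, b₂⟩, hp₂⟩ h12
      have hx : x₁ = x₂ := congrArg Subtype.val h12
      subst hx
      simp only at hp₁ hp₂
      rw [hp₁] at hp₂
      have hb : b₁ = b₂ := Option.some.inj hp₂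
      subst hb
      rfl
    exact lt_of_le_of_lt (mk_le_of_injective hinj) q.2.1
  have hginj : Function.Injective
      (fun q : {q : T → Option Bool // q ∈ Fn κ T ∧ ∀ x, q x ≠ none → x ∈ B} =>
        (⟨{p : ↥B × Bool | q.1 p.1.1 = some p.2}, hgr q⟩ :
          {s : Set (↥B × Bool) // #s < κ})) := by
    intro q₁ q₂ h12
    have hset : {p : ↥B × Bool | q₁.1 p.1.1 = some p.2} =
        {p : ↥B × Bool | q₂.1 p.1.1 = some p.2} := congrArg Subtype.val h12
    apply Subtype.ext
    funext x
    by_cases hx : x ∈ B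
    · cases h1 : q₁.1 x with
      | none =>
        cases h2 : q₂.1 x with
        | none => rfl
        | some b₂ =>
          have hm : (⟨⟨x, hx⟩, b₂⟩ : ↥B × Bool) ∈
              {p : ↥B × Bool | q₂.1 p.1.1 = some p.2} := h2
          rw [← hset] at hm
          have hm' : q₁.1 x = some b₂ := hm
          rw [h1] at hm'
          cases hm'
      | some b₁ =>
        have hm : (⟨⟨x, hx⟩, b₁⟩ : ↥B × Bool) ∈
            {p : ↥B × Bool | q₁.1 p.1.1 = some p.2} := h1
        rw [hset] at hm
        have h2 : q₂.1 x = some b₁ := hm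
        rw [h2]
    · have h1 : q₁.1 x = none := by
        by_contra h; exact hx (q₁.2.2 x h)
      have h2 : q₂.1 x = none := by
        by_contra h; exact hx (q₂.2.2 x h)
      rw [h1, h2]
  calc #{q : T → Option Bool // q ∈ Fn κ T ∧ ∀ x, q x ≠ none → x ∈ B}
      ≤ #{s : Set (↥B × Bool) // #s < κ} := mk_le_of_injective hginj
    _ ≤ κ := mk_small_subsets hreg hB hX

end Dev5
section Dev3

attribute [local instance] Classical.propDecidable

variable {κ : Cardinal.{u}} {T T' : Type u}

/-- Push a condition forward along an injection. -/
noncomputable def pushFn (e : T ↪ T') (p : T → Option Bool) : T' → Option Bool :=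
  fun y => if h : ∃ x, e x = y then p h.choose else none

theorem pushFn_apply (e : T ↪ T') (p : T → Option Bool) (x : T) :
    pushFn e p (e x) = p x := by
  have h : ∃ x', e x' = e x := ⟨x, rfl⟩
  have hx : h.choose = x := e.injective h.choose_spec
  simp [pushFn, dif_pos h, hx]

theorem pushFn_mem_Fn (e : T ↪ T') {p : T → Option Bool} (hp : p ∈ Fn κ T) :
    pushFn e p ∈ Fn κ T' := by
  rw [mem_Fn_iff]
  have hinj : ∀ y : {y | pushFn e p y ≠ none}, ∃ x : {x | p x ≠ none}, e x = y.1 := by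
    rintro ⟨y, hy⟩
    by_cases h : ∃ x, e x = y
    · refine ⟨⟨h.choose, ?_⟩, h.choose_spec⟩
      intro hnone
      exact hy (by simp [pushFn, dif_pos h, hnone])
    · exact absurd (by simp [pushFn, dif_neg h]) hy
  have : Function.Injective (fun y : {y | pushFn e p y ≠ none} =>
      (hinj y).choose) := by
    intro y₁ y₂ h12
    have h1 := (hinj y₁).choose_spec
    have h2 := (hinj y₂).choose_spec
    apply Subtype.ext
    rw [← h1, ← h2, congrArg (fun z => e z.1) h12]
  exact lt_of_le_of_lt (mk_le_of_injective this) hp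

/-- Transfer of a witness family along an injection into a bigger type. -/
theorem witness_pullback (hκ : ℵ₀ ≤ κ) (e : T ↪ T') {c : Cardinal.{u}}
    (hc : c ∈ WitSet κ T) : spaceBaire κ T' ≤ c := by
  obtain ⟨F, hcF, hFod, hFint⟩ := hc
  set π : (T' → Bool) → (T → Bool) := fun f => f ∘ e with hπ
  set D : ↥F → Set (T' → Bool) := fun U => π ⁻¹' U.1 with hD
  have hop : ∀ U : ↥F, @IsOpen _ (kTop κ T') (D U) := by
    intro U
    rw [isOpen_kTop_iff hκ]
    intro f' hf'
    obtain ⟨p, hp, hfp, hpU⟩ := (isOpen_kTop_iff hκ).1 (hFod U.1 U.2).1 (π f') hf'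
    refine ⟨pushFn e p, pushFn_mem_Fn e hp, ?_, ?_⟩
    · intro y b hb
      rcases h : (∃ x, e x = y) with _
      by_cases h : ∃ x, e x = y
      · obtain ⟨x, rfl⟩ := h
        rw [pushFn_apply] at hb
        exact hfp x b hb
      · simp [pushFn, dif_neg h] at hb
    · intro g hg
      have : π g ∈ cylinder p := by
        intro x b hb
        exact hg (e x) b (by rw [pushFn_apply]; exact hb)
      exact hpU this
  have hde : ∀ U : ↥F, @Dense _ (kTop κ T') (D U) := by
    intro U
    rw [dense_kTop_iff hκ]
    intro q' hq'
    set q : T → Option Bool := fun x => q' (e x) with hq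
    have hqF : q ∈ Fn κ T := by
      rw [mem_Fn_iff]
      have : Function.Injective
          (fun x : {x | q x ≠ none} => (⟨e x.1, x.2⟩ : {y | q' y ≠ none})) := by
        intro a b hab
        exact Subtype.ext (e.injective (congrArg Subtype.val hab))
      exact lt_of_le_of_lt (mk_le_of_injective this) hq'
    obtain ⟨g, hgU, hgq⟩ := (dense_kTop_iff hκ).1 (hFod U.1 U.2).2 q hqF
    refine ⟨fun y => if h : ∃ x, e x = y then g h.choose else totalExt q' y, ?_, ?_⟩
    · show _ ∈ π ⁻¹' U.1
      have : π (fun y => if h : ∃ x, e x = y then g h.choose else totalExt q' y) = g := by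
        funext x
        have h : ∃ x', e x' = e x := ⟨x, rfl⟩
        have hx : h.choose = x := e.injective h.choose_spec
        simp [hπ, Function.comp, dif_pos h, hx]
      rw [mem_preimage, this]
      exact hgU
    · intro y b hb
      by_cases h : ∃ x, e x = y
      · obtain ⟨x, rfl⟩ := h
        have h' : ∃ x', e x' = e x := ⟨x, rfl⟩
        have hx : h'.choose = x := e.injective h'.choose_spec
        simp only [dif_pos h', hx]
        exact hgq x b (by rw [hq]; exact hb)
      · simp [dif_neg h, totalExt, hb]
  have hint : ⋂ U : ↥F, D U = ∅ := by
    rw [eq_empty_iff_forall_notMem]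
    intro f' hf'
    have : π f' ∈ ⋂₀ F := by
      intro U hU
      exact mem_iInter.1 hf' ⟨U, hU⟩
    rw [hFint] at this
    exact this
  calc spaceBaire κ T' ≤ #↥F := spaceBaire_le_family D hop hde hint
    _ = c := hcF

/-- Antitonicity (via attainment of the infimum). -/
theorem spaceBaire_anti (hκ : ℵ₀ ≤ κ) (hT : κ ≤ #T) (e : T ↪ T') :
    spaceBaire κ T' ≤ spaceBaire κ T := by
  have hne := witSet_nonempty (κ := κ) (T := T) hκ hT
  have hmem := csInf_mem hne
  rw [spaceBaire_eq_sInf]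
  exact witness_pullback hκ e hmem

end Dev3
section Dev6

attribute [local instance] Classical.propDecidable

variable {κ : Cardinal.{u}} {T : Type u}

/-- witness extension into a dense open set -/
noncomputable def witExt (κ : Cardinal.{u}) (U : Set (T → Bool)) (q : T → Option Bool) :
    T → Option Bool :=
  if h : ∃ p, p ∈ Fn κ T ∧ ExtFn p q ∧ cylinder p ⊆ U then h.choose else q

theorem witExt_spec (hκ : ℵ₀ ≤ κ) {U : Set (T → Bool)}
    (hUo : @IsOpen _ (kTop κ T) U) (hUd : @Dense _ (kTop κ T) U)
    {q : T → Option Bool} (hq : q ∈ Fn κ T) :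
    witExt κ U q ∈ Fn κ T ∧ ExtFn (witExt κ U q) q ∧ cylinder (witExt κ U q) ⊆ U := by
  have h := exists_ext_into hκ hUo hUd hq
  rw [witExt, dif_pos h]
  exact h.choose_spec

/-- one closure step -/
def closStep (κ : Cardinal.{u}) (U : Set (T → Bool)) (B : Set T) : Set T :=
  B ∪ ⋃ q : {q : T → Option Bool // q ∈ Fn κ T ∧ ∀ x, q x ≠ none → x ∈ B},
    {x | witExt κ U q.1 x ≠ none}

theorem closStep_card (hreg : κ.IsRegular) (hB : ∀ ρ < κ, (2 : Cardinal.{u}) ^ ρ ≤ κ)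
    {U : Set (T → Bool)} (hUo : @IsOpen _ (kTop κ T) U) (hUd : @Dense _ (kTop κ T) U)
    {B : Set T} (hBκ : #↥B ≤ κ) : #↥(closStep κ U B) ≤ κ := by
  have hidx := mk_small_conds hreg hB hBκ
  calc #↥(closStep κ U B)
      ≤ #↥B + #↥(⋃ q : {q : T → Option Bool // q ∈ Fn κ T ∧ ∀ x, q x ≠ none → x ∈ B},
          {x | witExt κ U q.1 x ≠ none}) := mk_union_le _ _
    _ ≤ κ + κ := by
        apply add_le_add hBκ
        calc #↥(⋃ q : {q : T → Option Bool // q ∈ Fn κ T ∧ ∀ x, q x ≠ none → x ∈ B},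
              {x | witExt κ U q.1 x ≠ none})
            ≤ Cardinal.sum fun q : {q : T → Option Bool // q ∈ Fn κ T ∧
                ∀ x, q x ≠ none → x ∈ B} => #{x | witExt κ U q.1 x ≠ none} :=
              mk_iUnion_le_sum_mk
          _ ≤ Cardinal.sum fun _ : {q : T → Option Bool // q ∈ Fn κ T ∧
                ∀ x, q x ≠ none → x ∈ B} => κ := by
              apply sum_le_sum
              intro q
              exact (witExt_spec hreg.aleph0_le hUo hUd q.2.1).1.le
          _ = _ * κ := sum_const' _ _
          _ ≤ κ * κ := mul_le_mul' hidx le_rfl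
          _ = κ := mul_eq_self hreg.aleph0_le
    _ = κ := add_eq_self hreg.aleph0_le

/-- the transfinite closure chain -/
noncomputable def closChain (κ : Cardinal.{u}) (U : Set (T → Bool)) :
    (Cardinal.ord κ).ToType → Set T :=
  (wellFounded_lt (α := (Cardinal.ord κ).ToType)).fix fun i rec =>
    closStep κ U (⋃ j : {j // j < i}, rec j.1 j.2)

theorem closChain_eq (U : Set (T → Bool)) (i : (Cardinal.ord κ).ToType) :
    closChain κ U i = closStep κ U (⋃ j : {j // j < i}, closChain κ U j.1) := by
  rw [closChain, WellFounded.fix_eq]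

theorem closChain_card (hreg : κ.IsRegular) (hB : ∀ ρ < κ, (2 : Cardinal.{u}) ^ ρ ≤ κ)
    {U : Set (T → Bool)} (hUo : @IsOpen _ (kTop κ T) U) (hUd : @Dense _ (kTop κ T) U)
    (i : (Cardinal.ord κ).ToType) : #↥(closChain κ U i) ≤ κ := by
  induction i using WellFoundedLT.induction with
  | ind i IH =>
  rw [closChain_eq]
  apply closStep_card hreg hB hUo hUd
  calc #↥(⋃ j : {j // j < i}, closChain κ U j.1)
      ≤ Cardinal.sum fun j : {j // j < i} => #↥(closChain κ U j.1) := mk_iUnion_le_sum_mk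
    _ ≤ Cardinal.sum fun _ : {j // j < i} => κ := sum_le_sum _ _ fun j => IH j.1 j.2
    _ = _ * κ := sum_const' _ _
    _ ≤ κ * κ := mul_le_mul' (mk_Iio_ord_toType i).le le_rfl
    _ = κ := mul_eq_self hreg.aleph0_le

/-- Closure of a dense open set: a `≤ κ`-sized support set with witnesses inside. -/
theorem exists_closure (hreg : κ.IsRegular) (hB : ∀ ρ < κ, (2 : Cardinal.{u}) ^ ρ ≤ κ)
    {U : Set (T → Bool)} (hUo : @IsOpen _ (kTop κ T) U) (hUd : @Dense _ (kTop κ T) U) :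
    ∃ S₀ : Set T, #↥S₀ ≤ κ ∧ ∀ q, q ∈ Fn κ T → (∀ x, q x ≠ none → x ∈ S₀) →
      ∃ p, p ∈ Fn κ T ∧ (∀ x, p x ≠ none → x ∈ S₀) ∧ ExtFn p q ∧ cylinder p ⊆ U := by
  have hκ := hreg.aleph0_le
  refine ⟨⋃ i, closChain κ U i, ?_, ?_⟩
  · calc #↥(⋃ i, closChain κ U i)
        ≤ Cardinal.sum fun i : (Cardinal.ord κ).ToType => #↥(closChain κ U i) :=
          mk_iUnion_le_sum_mk
      _ ≤ Cardinal.sum fun _ : (Cardinal.ord κ).ToType => κ :=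
          sum_le_sum _ _ fun i => closChain_card hreg hB hUo hUd i
      _ = _ * κ := sum_const' _ _
      _ = κ * κ := by rw [mk_toType, Cardinal.card_ord]
      _ = κ := mul_eq_self hκ
  · intro q hqFn hqsupp
    -- find a level above all supports
    have hlev : ∀ x : {x | q x ≠ none}, ∃ i, x.1 ∈ closChain κ U i := by
      intro x
      have := hqsupp x.1 x.2
      exact mem_iUnion.1 this
    set f : {x | q x ≠ none} → Ordinal.{u} := fun x =>
      @Ordinal.typein ((Cardinal.ord κ).ToType) (· < ·) isWellOrder_lt (hlev x).choose + 1
      with hf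
    have hfb : ∀ x, f x < Cardinal.ord κ := by
      intro x
      have h1 := @Ordinal.typein_lt_self (Cardinal.ord κ) (hlev x).choose
      rw [hf]
      dsimp only
      rw [Ordinal.add_one_eq_succ]
      exact (Cardinal.isSuccLimit_ord hκ).succ_lt h1
    have hsup : iSup f < Cardinal.ord κ :=
      Cardinal.iSup_lt_ord_of_isRegular hreg hqFn hfb
    set istar : (Cardinal.ord κ).ToType :=
      Ordinal.ToType.mk (o := Cardinal.ord κ) ⟨iSup f, hsup⟩ with histar
    have hlt : ∀ x : {x | q x ≠ none}, (hlev x).choose < istar := by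
      intro x
      have h1 : f x ≤ iSup f := le_ciSup (Ordinal.bddAbove_range f) x
      have h2 : @Ordinal.typein ((Cardinal.ord κ).ToType) (· < ·) isWellOrder_lt
          (hlev x).choose < iSup f := by
        rw [hf] at h1
        dsimp only at h1
        calc _ < _ + 1 := lt_add_one _
          _ ≤ iSup f := h1
      have h3 : @Ordinal.typein ((Cardinal.ord κ).ToType) (· < ·) isWellOrder_lt istar
          = iSup f := by
        rw [histar]
        exact @Ordinal.typein_enum _ (· < ·) isWellOrder_lt _ _
      rw [← h3] at h2
      exact (@Ordinal.typein_lt_typein _ (· < ·) isWellOrder_lt _ _).1 h2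
    have hqB : ∀ x, q x ≠ none → x ∈ ⋃ j : {j // j < istar}, closChain κ U j.1 := by
      intro x hx
      exact mem_iUnion.2 ⟨⟨(hlev ⟨x, hx⟩).choose, hlt ⟨x, hx⟩⟩, (hlev ⟨x, hx⟩).choose_spec⟩
    refine ⟨witExt κ U q, (witExt_spec hκ hUo hUd hqFn).1, ?_,
      (witExt_spec hκ hUo hUd hqFn).2.1, (witExt_spec hκ hUo hUd hqFn).2.2⟩
    intro x hx
    have hstep : x ∈ closStep κ U (⋃ j : {j // j < istar}, closChain κ U j.1) := by
      apply Set.mem_union_right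
      exact mem_iUnion.2 ⟨⟨q, hqFn, hqB⟩, hx⟩
    rw [← closChain_eq] at hstep
    exact mem_iUnion.2 ⟨istar, hstep⟩

end Dev6
section Dev7

attribute [local instance] Classical.propDecidable

variable {κ : Cardinal.{u}} {T T' : Type u}

/-- restriction of a condition to a subset -/
def resFn (S : Set T) (p : T → Option Bool) : ↥S → Option Bool := fun x => p x.1

theorem resFn_mem_Fn {S : Set T} {p : T → Option Bool} (hp : p ∈ Fn κ T) :
    resFn S p ∈ Fn κ ↥S := by
  rw [mem_Fn_iff]
  have hinj : Function.Injective (fun x : {x : ↥S | resFn S p x ≠ none} =>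
      (⟨x.1.1, x.2⟩ : {x | p x ≠ none})) := by
    intro a b hab
    have h2 := congrArg Subtype.val hab
    exact Subtype.ext (Subtype.ext h2)
  exact lt_of_le_of_lt (mk_le_of_injective hinj) hp

/-- The transfer theorem in the case `2 ^ ρ ≤ κ` for all `ρ < κ`. -/
theorem transferB (hreg : κ.IsRegular) (hB : ∀ ρ < κ, (2 : Cardinal.{u}) ^ ρ ≤ κ)
    {c : Cardinal.{u}} (hc : c ∈ WitSet κ T) (hcT' : c ≤ #T') :
    spaceBaire κ T' ≤ c := by
  have hκ := hreg.aleph0_le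
  have hgt : κ < c := witSet_gt hreg hc
  have hcinf : ℵ₀ ≤ c := hκ.trans hgt.le
  obtain ⟨F, hcF, hFod, hFint⟩ := hc
  have hcl : ∀ U : ↥F, ∃ S₀ : Set T, #↥S₀ ≤ κ ∧
      ∀ q, q ∈ Fn κ T → (∀ x, q x ≠ none → x ∈ S₀) →
        ∃ p, p ∈ Fn κ T ∧ (∀ x, p x ≠ none → x ∈ S₀) ∧ ExtFn p q ∧ cylinder p ⊆ U.1 :=
    fun U => exists_closure hreg hB (hFod U.1 U.2).1 (hFod U.1 U.2).2
  set SU : ↥F → Set T := fun U => (hcl U).choose with hSU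
  set S : Set T := ⋃ U : ↥F, SU U with hS
  have hSU_sub : ∀ U, SU U ⊆ S := fun U => subset_iUnion SU U
  have hS_card : #↥S ≤ c := by
    calc #↥S ≤ Cardinal.sum fun U : ↥F => #↥(SU U) := mk_iUnion_le_sum_mk
      _ ≤ Cardinal.sum fun _ : ↥F => κ := sum_le_sum _ _ fun U => (hcl U).choose_spec.1
      _ = #↥F * κ := sum_const' _ _
      _ = c * κ := by rw [hcF]
      _ ≤ c * c := mul_le_mul' le_rfl hgt.le
      _ = c := mul_eq_self hcinf
  set E : ↥F → Set (↥S → Bool) := fun U =>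
    {g | ∃ p : T → Option Bool, p ∈ Fn κ T ∧ (∀ x, p x ≠ none → x ∈ SU U) ∧
      cylinder p ⊆ U.1 ∧ g ∈ cylinder (resFn S p)} with hE
  have hop : ∀ U, @IsOpen _ (kTop κ ↥S) (E U) := by
    intro U
    have : E U = ⋃ p : {p : T → Option Bool // p ∈ Fn κ T ∧ (∀ x, p x ≠ none → x ∈ SU U) ∧
        cylinder p ⊆ U.1}, cylinder (resFn S p.1) := by
      ext g
      simp only [hE, mem_setOf_eq, mem_iUnion]
      constructor
      · rintro ⟨p, h1, h2, h3, h4⟩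
        exact ⟨⟨p, h1, h2, h3⟩, h4⟩
      · rintro ⟨⟨p, h1, h2, h3⟩, h4⟩
        exact ⟨p, h1, h2, h3, h4⟩
    rw [this]
    letI := kTop κ ↥S
    exact isOpen_iUnion fun p => isOpen_cylinder (resFn_mem_Fn p.2.1)
  have hde : ∀ U, @Dense _ (kTop κ ↥S) (E U) := by
    intro U
    rw [dense_kTop_iff hκ]
    intro qhat hqhat
    set qT : T → Option Bool := fun x => if h : x ∈ S then qhat ⟨x, h⟩ else none with hqT
    have hqT_Fn : qT ∈ Fn κ T := by
      rw [mem_Fn_iff]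
      have hmemS : ∀ x : {x | qT x ≠ none}, x.1 ∈ S := by
        rintro ⟨x, hx⟩
        by_contra h
        exact hx (by simp [hqT, dif_neg h])
      have hne : ∀ x : {x | qT x ≠ none}, qhat ⟨x.1, hmemS x⟩ ≠ none := by
        rintro ⟨x, hx⟩
        intro h
        exact hx (by simp [hqT, dif_pos (hmemS ⟨x, hx⟩), h])
      have hinj : Function.Injective (fun x : {x | qT x ≠ none} =>
          (⟨⟨x.1, hmemS x⟩, hne x⟩ : {y : ↥S | qhat y ≠ none})) := by
        intro a b hab
        have := congrArg (fun z => (z.1 : ↥S).1) hab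
        exact Subtype.ext this
      exact lt_of_le_of_lt (mk_le_of_injective hinj) hqhat
    set qU : T → Option Bool := fun x => if x ∈ SU U then qT x else none with hqU
    have hqU_Fn : qU ∈ Fn κ T := by
      rw [mem_Fn_iff]
      refine lt_of_le_of_lt (mk_le_mk_of_subset ?_) hqT_Fn
      intro x hx
      simp only [hqU, mem_setOf_eq] at hx
      by_cases h : x ∈ SU U
      · rw [if_pos h] at hx; exact hx
      · rw [if_neg h] at hx; exact absurd rfl hx
    have hqU_supp : ∀ x, qU x ≠ none → x ∈ SU U := by
      intro x hx
      by_contra h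
      exact hx (by simp [hqU, if_neg h])
    obtain ⟨p, hpFn, hpsupp, hpExt, hpcyl⟩ := (hcl U).choose_spec.2 qU hqU_Fn hqU_supp
    set g : ↥S → Bool := fun x => (mergeFn p qT x.1).getD false with hg
    have hgp : g ∈ cylinder (resFn S p) := by
      intro x b hb
      have : mergeFn p qT x.1 = some b := by
        have hpx : p x.1 = some b := hb
        simp [mergeFn, hpx]
      simp [hg, this]
    refine ⟨g, ⟨p, hpFn, hpsupp, hpcyl, hgp⟩, ?_⟩
    intro x b hb
    have hqTx : qT x.1 = some b := by
      have : qhat ⟨x.1, x.2⟩ = some b := by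
        have hxeq : (⟨x.1, x.2⟩ : ↥S) = x := rfl
        rw [hxeq]; exact hb
      simp [hqT, dif_pos x.2, this]
    rcases hpx : p x.1 with _ | b'
    · have : mergeFn p qT x.1 = some b := by simp [mergeFn, hpx, hqTx]
      simp [hg, this]
    · have hxSU : x.1 ∈ SU U := hpsupp x.1 (by rw [hpx]; exact Option.some_ne_none _)
      have hqUx : qU x.1 = some b := by simp [hqU, if_pos hxSU, hqTx]
      have := hpExt x.1 b hqUx
      rw [hpx] at this
      have hb' : b' = b := Option.some.inj this
      subst hb'
      have : mergeFn p qT x.1 = some b' := by simp [mergeFn, hpx]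
      simp [hg, this]
  have hint : ⋂ U : ↥F, E U = ∅ := by
    rw [eq_empty_iff_forall_notMem]
    intro g hg
    have hgU : ∀ U : ↥F, ∃ p : T → Option Bool, p ∈ Fn κ T ∧
        (∀ x, p x ≠ none → x ∈ SU U) ∧ cylinder p ⊆ U.1 ∧ g ∈ cylinder (resFn S p) :=
      fun U => mem_iInter.1 hg U
    set f : T → Bool := fun x => if h : x ∈ S then g ⟨x, h⟩ else false with hff
    have hfU : ∀ U : ↥F, f ∈ U.1 := by
      intro U
      obtain ⟨p, hpFn, hpsupp, hpcyl, hgp⟩ := hgU U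
      apply hpcyl
      intro x b hb
      have hxS : x ∈ S := hSU_sub U (hpsupp x (by rw [hb]; exact Option.some_ne_none _))
      have : g ⟨x, hxS⟩ = b := hgp ⟨x, hxS⟩ b hb
      simp [hff, dif_pos hxS, this]
    have : f ∈ ⋂₀ F := fun U hU => hfU ⟨U, hU⟩
    rw [hFint] at this
    exact this
  have hmem := witSet_mem_of_family E hop hde hint
  have hSe : #↥S ≤ #T' := hS_card.trans hcT'
  obtain ⟨e⟩ := Cardinal.le_def _ _ |>.1 hSe
  calc spaceBaire κ T' ≤ #(range E) := witness_pullback hκ e hmem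
    _ ≤ #↥F := mk_range_le
    _ = c := hcF

end Dev7
section Dev8

attribute [local instance] Classical.propDecidable

variable {κ : Cardinal.{u}} {T : Type u}

/-- Case A: if some `2 ^ ρ` exceeds `κ` below `κ`, the Baire number is `κ⁺`. -/
theorem caseA_le (hreg : κ.IsRegular) {ρ : Cardinal.{u}} (hρκ : ρ < κ) (hρ2 : κ < 2 ^ ρ)
    (hT : κ ≤ #T) : spaceBaire κ T ≤ Order.succ κ := by
  have hκ := hreg.aleph0_le
  set κs : Cardinal.{u} := Order.succ κ with hκs
  -- embed the blocks
  have hJ : #(Quotient.out κ × Quotient.out ρ) ≤ #T := by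
    rw [mk_prod]
    simp only [Cardinal.lift_id, mk_out]
    calc κ * ρ ≤ κ * κ := mul_le_mul' le_rfl hρκ.le
      _ = κ := mul_eq_self hκ
      _ ≤ #T := hT
  obtain ⟨e⟩ := Cardinal.le_def _ _ |>.1 hJ
  -- embed `κ⁺` into `ρ.out → Bool`
  have hXle : #(Quotient.out κs) ≤ #(Quotient.out ρ → Bool) := by
    rw [mk_out, mk_arrow]
    simp only [Cardinal.lift_id, Cardinal.lift_uzero, mk_bool, Cardinal.lift_two, mk_out]
    rw [hκs]
    exact Order.succ_le_of_lt hρ2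
  obtain ⟨Ecode⟩ := Cardinal.le_def _ _ |>.1 hXle
  set D : Quotient.out κs → Set (T → Bool) := fun i =>
    {f | ∃ γ : Quotient.out κ, ∀ m : Quotient.out ρ, f (e (γ, m)) = Ecode i m} with hD
  set blockFn : Quotient.out κs → Quotient.out κ → (T → Option Bool) :=
    fun i γ z => if h : ∃ m, e (γ, m) = z then some (Ecode i h.choose) else none with hbf
  have hbf_Fn : ∀ i γ, blockFn i γ ∈ Fn κ T := by
    intro i γ
    rw [mem_Fn_iff]
    have hex : ∀ z : {z | blockFn i γ z ≠ none}, ∃ m, e (γ, m) = z.1 := by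
      rintro ⟨z, hz⟩
      by_contra h
      exact hz (by simp [hbf, dif_neg h])
    have hinj : Function.Injective (fun z : {z | blockFn i γ z ≠ none} => (hex z).choose) := by
      intro z₁ z₂ h12
      apply Subtype.ext
      have h12' : (hex z₁).choose = (hex z₂).choose := h12
      rw [← (hex z₁).choose_spec, ← (hex z₂).choose_spec, h12']
    calc #{z | blockFn i γ z ≠ none} ≤ #(Quotient.out ρ) := mk_le_of_injective hinj
      _ = ρ := mk_out ρ
      _ < κ := hρκ
  have hbf_cyl : ∀ i γ (f : T → Bool),
      f ∈ cylinder (blockFn i γ) ↔ ∀ m, f (e (γ, m)) = Ecode i m := by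
    intro i γ f
    constructor
    · intro hf m
      have h : ∃ m', e (γ, m') = e (γ, m) := ⟨m, rfl⟩
      have hm : h.choose = m := by
        have := h.choose_spec
        have := e.injective this
        exact (Prod.ext_iff.1 this).2
      have := hf (e (γ, m)) (Ecode i h.choose) (by simp [hbf, dif_pos h])
      rw [hm] at this
      exact this
    · intro hf z b hb
      simp only [hbf] at hb
      split at hb
      · rename_i h
        have hbe : b = Ecode i h.choose := (Option.some.inj hb).symm
        rw [← h.choose_spec, hf h.choose, hbe]
      · cases hb
  have hopen : ∀ i, @IsOpen _ (kTop κ T) (D i) := by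
    intro i
    have : D i = ⋃ γ, cylinder (blockFn i γ) := by
      ext f
      simp only [hD, mem_setOf_eq, mem_iUnion]
      constructor
      · rintro ⟨γ, hγ⟩; exact ⟨γ, (hbf_cyl i γ f).2 hγ⟩
      · rintro ⟨γ, hγ⟩; exact ⟨γ, (hbf_cyl i γ f).1 hγ⟩
    rw [this]
    letI := kTop κ T
    exact isOpen_iUnion fun γ => isOpen_cylinder (hbf_Fn i γ)
  have hdense : ∀ i, @Dense _ (kTop κ T) (D i) := by
    intro i
    rw [dense_kTop_iff hκ]
    intro p hp
    have hfree : ∃ γ, ∀ m, p (e (γ, m)) = none := by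
      by_contra h
      push_neg at h
      have hinj : Function.Injective (fun γ : Quotient.out κ =>
          (⟨e (γ, (h γ).choose), (h γ).choose_spec⟩ : {z | p z ≠ none})) := by
        intro γ₁ γ₂ h12
        have h2 := congrArg Subtype.val h12
        have := e.injective h2
        exact (Prod.ext_iff.1 this).1
      have : κ ≤ #{z | p z ≠ none} := by
        calc κ = #(Quotient.out κ) := (mk_out κ).symm
          _ ≤ _ := mk_le_of_injective hinj
      exact absurd hp (not_lt.2 this)
    obtain ⟨γ, hγ⟩ := hfree
    set g : T → Bool := fun z => if h : ∃ m, e (γ, m) = z then Ecode i h.choose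
      else totalExt p z with hg
    refine ⟨g, ?_, ?_⟩
    · refine ⟨γ, fun m => ?_⟩
      have h : ∃ m', e (γ, m') = e (γ, m) := ⟨m, rfl⟩
      have hm : h.choose = m := by
        have := e.injective h.choose_spec
        exact (Prod.ext_iff.1 this).2
      simp only [hg, dif_pos h, hm]
    · intro z b hb
      have hz : ¬ ∃ m, e (γ, m) = z := by
        rintro ⟨m, rfl⟩
        rw [hγ m] at hb
        cases hb
      simp only [hg, dif_neg hz]
      simp [totalExt, hb]
  have hint : ⋂ i, D i = ∅ := by
    rw [eq_empty_iff_forall_notMem]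
    intro f hf
    have hall : ∀ i, ∃ γ, ∀ m, f (e (γ, m)) = Ecode i m := fun i => mem_iInter.1 hf i
    have hinj : Function.Injective (fun i => (hall i).choose) := by
      intro i₁ i₂ h12
      apply Ecode.injective
      funext m
      have h1 := (hall i₁).choose_spec m
      have h2 := (hall i₂).choose_spec m
      have h12' : (hall i₁).choose = (hall i₂).choose := h12
      rw [← h1, ← h2, h12']
    have : κs ≤ κ := by
      calc κs = #(Quotient.out κs) := (mk_out _).symm
        _ ≤ #(Quotient.out κ) := mk_le_of_injective hinj
        _ = κ := mk_out κ
    rw [hκs] at this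
    exact absurd this (not_le.2 (Order.lt_succ κ))
  calc spaceBaire κ T ≤ #(Quotient.out κs) :=
        spaceBaire_le_family D hopen hdense hint
    _ = Order.succ κ := by rw [mk_out, hκs]

end Dev8
/-- Fact 5: `θ = 𝔫_κ^{2^κ}` is the unique cardinal `μ ≥ κ` with `𝔫_κ^μ = μ`, and
`𝔫_κ^{θ₁} = θ` for every `θ₁ ≥ θ`. -/
theorem baire_unique_fixed_point (κ : Cardinal.{u}) (hκ : κ.IsRegular) :
    nBaire κ (nBaire κ ((2 : Cardinal.{u}) ^ κ)) = nBaire κ ((2 : Cardinal.{u}) ^ κ) ∧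
    (∀ μ : Cardinal.{u}, κ ≤ μ → nBaire κ μ = μ → μ = nBaire κ ((2 : Cardinal.{u}) ^ κ)) ∧
    (∀ θ₁ : Cardinal.{u}, nBaire κ ((2 : Cardinal.{u}) ^ κ) ≤ θ₁ →
      nBaire κ θ₁ = nBaire κ ((2 : Cardinal.{u}) ^ κ)) := by
  have hκ0 := hκ.aleph0_le
  have hκΛ : κ ≤ (2 : Cardinal.{u}) ^ κ := (Cardinal.cantor κ).le
  -- general facts
  have ha1 : ∀ μ : Cardinal.{u}, κ ≤ μ → κ < nBaire κ μ := by
    intro μ h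
    exact lt_of_lt_of_le (Order.lt_succ κ)
      (succ_le_spaceBaire hκ (by rw [mk_out]; exact h))
  have ha2 : ∀ μ : Cardinal.{u}, κ ≤ μ → nBaire κ μ ≤ (2 : Cardinal.{u}) ^ κ := by
    intro μ h
    exact spaceBaire_le_two_power hκ0 (by rw [mk_out]; exact h)
  have hanti : ∀ a b : Cardinal.{u}, κ ≤ a → a ≤ b → nBaire κ b ≤ nBaire κ a := by
    intro a b ha hab
    have hle : #(Quotient.out a) ≤ #(Quotient.out b) := by rw [mk_out, mk_out]; exact hab
    obtain ⟨e⟩ := Cardinal.le_def _ _ |>.1 hle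
    exact spaceBaire_anti hκ0 (by rw [mk_out]; exact ha) e
  by_cases hcase : ∃ ρ : Cardinal.{u}, ρ < κ ∧ κ < 2 ^ ρ
  · -- Case A : the Baire number is everywhere κ⁺
    obtain ⟨ρ, hρκ, hρ2⟩ := hcase
    have hAll : ∀ μ : Cardinal.{u}, κ ≤ μ → nBaire κ μ = Order.succ κ := by
      intro μ h
      apply le_antisymm
      · exact caseA_le hκ hρκ hρ2 (by rw [mk_out]; exact h)
      · exact succ_le_spaceBaire hκ (by rw [mk_out]; exact h)
    have hΛA : nBaire κ ((2 : Cardinal.{u}) ^ κ) = Order.succ κ := hAll _ hκΛ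
    have hκs : κ ≤ Order.succ κ := (Order.lt_succ κ).le
    refine ⟨?_, ?_, ?_⟩
    · rw [hΛA, hAll _ hκs]
    · intro μ hμκ hfix
      rw [hΛA, ← hfix, hAll _ hμκ]
    · intro θ₁ hθ₁
      rw [hΛA] at hθ₁ ⊢
      exact hAll _ (hκs.trans hθ₁)
  · -- Case B : 2 ^ ρ ≤ κ for all ρ < κ
    push_neg at hcase
    have hB : ∀ ρ < κ, (2 : Cardinal.{u}) ^ ρ ≤ κ := hcase
    -- the transfer inequality
    have htrans : ∀ μ : Cardinal.{u}, κ ≤ μ → nBaire κ (nBaire κ μ) ≤ nBaire κ μ := by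
      intro μ hμκ
      have hmem : nBaire κ μ ∈ WitSet κ (Quotient.out μ) := by
        show spaceBaire κ (Quotient.out μ) ∈ WitSet κ (Quotient.out μ)
        rw [spaceBaire_eq_sInf]
        exact csInf_mem (witSet_nonempty hκ0 (by rw [mk_out]; exact hμκ))
      exact transferB hκ hB hmem (by rw [mk_out])
    -- part 1
    have hκθ : κ ≤ nBaire κ ((2 : Cardinal.{u}) ^ κ) := (ha1 _ hκΛ).le
    have hθΛ : nBaire κ ((2 : Cardinal.{u}) ^ κ) ≤ (2 : Cardinal.{u}) ^ κ := ha2 _ hκΛ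
    have hpart1 : nBaire κ (nBaire κ ((2 : Cardinal.{u}) ^ κ)) =
        nBaire κ ((2 : Cardinal.{u}) ^ κ) := by
      apply le_antisymm
      · exact htrans _ hκΛ
      · exact hanti _ _ hκθ hθΛ
    refine ⟨hpart1, ?_, ?_⟩
    · intro μ hμκ hfix
      have hμΛ : μ ≤ (2 : Cardinal.{u}) ^ κ := hfix ▸ ha2 μ hμκ
      have h1 : nBaire κ ((2 : Cardinal.{u}) ^ κ) ≤ μ := by
        have := hanti μ _ hμκ hμΛ
        rwa [hfix] at this
      have h2 : μ ≤ nBaire κ ((2 : Cardinal.{u}) ^ κ) := by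
        have h3 := hanti _ μ hκθ h1
        rw [hfix, hpart1] at h3
        exact h3
      exact le_antisymm h2 h1
    · intro θ₁ hθ₁
      have hκθ₁ : κ ≤ θ₁ := hκθ.trans hθ₁
      apply le_antisymm
      · rcases le_total θ₁ ((2 : Cardinal.{u}) ^ κ) with h | h
        · have := hanti _ θ₁ hκθ hθ₁
          rwa [hpart1] at this
        · exact hanti _ θ₁ hκΛ h
      · have hμ'κ : κ ≤ nBaire κ θ₁ := (ha1 _ hκθ₁).le
        have hμ'Λ : nBaire κ θ₁ ≤ (2 : Cardinal.{u}) ^ κ := ha2 _ hκθ₁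
        have h1 : nBaire κ ((2 : Cardinal.{u}) ^ κ) ≤ nBaire κ (nBaire κ θ₁) :=
          hanti _ _ hμ'κ hμ'Λ
        exact h1.trans (htrans _ hκθ₁)
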